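/- arXiv:1404.6333 — 2 statements merged into one kernel-verified Lean document; each statement's English description precedes it below -/
import Mathlib

section
/- In a recollement situation (i_*, j*) as in BBD with weight structures on D_Z and D_U, suppose f* -type functors are to preserve non-positivity and f^!-type functors non-negativity. Define D_{w≤0} = {M : i* M ∈ (D_Z)_{w≤0} and j* M ∈ (D_U)_{w≤0}} and D_{w≥0} = {M : i^! M ∈ (D_Z)_{w≥0} and j^! M = j* M ∈ (D_U)_{w≥0}}. If weight structures can be glued (Bondarko), the resulting D_{w≤0} is generated under extensions, shifts [n] for n ≤ 0, and direct summands by j_!((D_U)_{w≤0}) and i_*((D_Z)_{w≤0}). -/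
open CategoryTheory Limits Pretriangulated

/-- A weight structure on a triangulated category, following Bondarko:
a pair of full subcategories (given by predicates on objects) `le0 = C_{w≤0}` and
`ge0 = C_{w≥0}`, closed under direct summands, with the shift-monotonicity conditions
`C_{w≤0} ⊆ C_{w≤0}[1]` and `C_{w≥0}[1] ⊆ C_{w≥0}`, orthogonality
`Hom(X, Y) = 0` for `X ∈ C_{w≤0}`, `Y ∈ C_{w≥0}[1]`, and weight decomposition triangles. -/
structure WeightStructure (C : Type*) [Category C] [Preadditive C] [HasZeroObject C]
    [HasShift C ℤ] [∀ n : ℤ, (CategoryTheory.shiftFunctor C n).Additive]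
    [Pretriangulated C] where
  le0 : C → Prop
  ge0 : C → Prop
  le0_summand : ∀ ⦃X Y : C⦄ (i : X ⟶ Y) (r : Y ⟶ X), i ≫ r = 𝟙 X → le0 Y → le0 X
  ge0_summand : ∀ ⦃X Y : C⦄ (i : X ⟶ Y) (r : Y ⟶ X), i ≫ r = 𝟙 X → ge0 Y → ge0 X
  le0_shift : ∀ ⦃X : C⦄, le0 X → le0 (X⟦(-1 : ℤ)⟧)
  ge0_shift : ∀ ⦃X : C⦄, ge0 X → ge0 (X⟦(1 : ℤ)⟧)
  orth : ∀ ⦃X Y : C⦄, le0 X → ge0 Y → ∀ f : X ⟶ Y⟦(1 : ℤ)⟧, f = 0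
  decomp : ∀ X : C, ∃ (A B : C) (_ : le0 A) (_ : ge0 B)
    (f : A ⟶ X) (g : X ⟶ B⟦(1 : ℤ)⟧) (h : B⟦(1 : ℤ)⟧ ⟶ A⟦(1 : ℤ)⟧),
    Triangle.mk f g h ∈ distTriang C


/-- The closure of a class of objects under isomorphisms, non-positive shifts `[n]`
(`n ≤ 0`), extensions (distinguished triangles), and direct summands. -/
inductive NegGen {C : Type*} [Category C] [Preadditive C] [HasZeroObject C] [HasShift C ℤ]
    [∀ n : ℤ, (CategoryTheory.shiftFunctor C n).Additive] [Pretriangulated C]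
    (S : Set C) : C → Prop
  | of {X : C} : X ∈ S → NegGen S X
  | iso {X Y : C} : (X ≅ Y) → NegGen S X → NegGen S Y
  | shiftNeg {X : C} (n : ℤ) : n ≤ 0 → NegGen S X → NegGen S (X⟦n⟧)
  | ext {X Y Z : C} (f : X ⟶ Y) (g : Y ⟶ Z) (h : Z ⟶ X⟦(1 : ℤ)⟧) :
      (Triangle.mk f g h ∈ distTriang C) → NegGen S X → NegGen S Z → NegGen S Y
  | summand {X Y : C} (i : X ⟶ Y) (r : Y ⟶ X) : i ≫ r = 𝟙 X → NegGen S Y → NegGen S X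


section Aux

variable {C : Type*} [Category C] [Preadditive C] [HasZeroObject C] [HasShift C ℤ]
  [∀ n : ℤ, (CategoryTheory.shiftFunctor C n).Additive] [Pretriangulated C]
  (w : WeightStructure C)

lemma WeightStructure.le0_iso {X Y : C} (e : X ≅ Y) (h : w.le0 X) : w.le0 Y :=
  w.le0_summand e.inv e.hom e.inv_hom_id h

lemma WeightStructure.le0_of_isZero {X : C} (hX : IsZero X) : w.le0 X := by
  obtain ⟨A, B, hA, hB, f, g, δ, hT⟩ := w.decomp X
  exact w.le0_summand (0 : X ⟶ A) 0 (hX.eq_of_src _ _) hA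

lemma WeightStructure.le0_shift_neg {X : C} (h : w.le0 X) (n : ℤ) (hn : n ≤ 0) :
    w.le0 (X⟦n⟧) := by
  have key : ∀ k : ℕ, w.le0 (X⟦-(k : ℤ)⟧) := by
    intro k
    induction k with
    | zero =>
      refine w.le0_iso (X := X) ?_ h
      exact ((shiftFunctorZero C ℤ).app X).symm ≪≫
        eqToIso (by norm_num)
    | succ k ih =>
      refine w.le0_iso ?_ (w.le0_shift ih)
      exact ((shiftFunctorAdd' C (-(k : ℤ)) (-1 : ℤ) (-((k + 1 : ℕ) : ℤ))
        (by push_cast; ring)).app X).symm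
  have hn' : n = -(((-n).toNat : ℕ) : ℤ) := by omega
  rw [hn']
  exact key _

lemma WeightStructure.le0_iff_orth (Y : C) :
    w.le0 Y ↔ ∀ B : C, w.ge0 B → ∀ f : Y ⟶ B⟦(1 : ℤ)⟧, f = 0 := by
  constructor
  · intro h B hB f
    exact w.orth h hB f
  · intro h
    obtain ⟨A, B, hA, hB, f, g, δ, hT⟩ := w.decomp Y
    obtain ⟨s, hs⟩ := Triangle.coyoneda_exact₂ _ hT (𝟙 Y)
      (by exact (Category.id_comp g).trans (h B hB g))
    exact w.le0_summand s f hs.symm hA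

lemma WeightStructure.le0_ext {X Y Z : C} (f : X ⟶ Y) (g : Y ⟶ Z) (h : Z ⟶ X⟦(1 : ℤ)⟧)
    (hT : Triangle.mk f g h ∈ distTriang C) (hX : w.le0 X) (hZ : w.le0 Z) : w.le0 Y := by
  rw [w.le0_iff_orth]
  intro B hB φ
  obtain ⟨ψ, hψ⟩ := Triangle.yoneda_exact₂ _ hT φ (w.orth hX hB (f ≫ φ))
  rw [hψ, w.orth hZ hB ψ]; exact Limits.comp_zero

end Aux

/-- Bondarko's gluing of weight structures along a recollement `D_Z → D ← D_U`:
the non-positive part `D_{w≤0} = {M : i^*M ∈ (D_Z)_{w≤0}, j^*M ∈ (D_U)_{w≤0}}` of the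
glued weight structure is generated, under extensions, shifts `[n]` for `n ≤ 0`,
isomorphisms and direct summands, by `j_!((D_U)_{w≤0})` and `i_*((D_Z)_{w≤0})`. -/
theorem glued_weightStructure_negative_part_generated
    {D DZ DU : Type*}
    [Category D] [Preadditive D] [HasZeroObject D] [HasShift D ℤ]
    [∀ n : ℤ, (CategoryTheory.shiftFunctor D n).Additive] [Pretriangulated D]
    [Category DZ] [Preadditive DZ] [HasZeroObject DZ] [HasShift DZ ℤ]
    [∀ n : ℤ, (CategoryTheory.shiftFunctor DZ n).Additive] [Pretriangulated DZ]
    [Category DU] [Preadditive DU] [HasZeroObject DU] [HasShift DU ℤ]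
    [∀ n : ℤ, (CategoryTheory.shiftFunctor DU n).Additive] [Pretriangulated DU]
    (iSt : DZ ⥤ D) (iPull : D ⥤ DZ) (iShk : D ⥤ DZ)
    (jPull : D ⥤ DU) (jL : DU ⥤ D) (jR : DU ⥤ D)
    (adj₁ : iPull ⊣ iSt) (adj₂ : iSt ⊣ iShk)
    (adj₃ : jL ⊣ jPull) (adj₄ : jPull ⊣ jR)
    [iSt.Full] [iSt.Faithful] [jL.Full] [jL.Faithful] [jR.Full] [jR.Faithful]
    (hji : ∀ Z : DZ, IsZero (jPull.obj (iSt.obj Z)))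
    (htri₁ : ∀ M : D, ∃ δ : iSt.obj (iPull.obj M) ⟶ (jL.obj (jPull.obj M))⟦(1 : ℤ)⟧,
      Triangle.mk (adj₃.counit.app M) (adj₁.unit.app M) δ ∈ distTriang D)
    (htri₂ : ∀ M : D, ∃ δ : jR.obj (jPull.obj M) ⟶ (iSt.obj (iShk.obj M))⟦(1 : ℤ)⟧,
      Triangle.mk (adj₂.counit.app M) (adj₄.unit.app M) δ ∈ distTriang D)
    (wZ : WeightStructure DZ) (wU : WeightStructure DU)
    (w : WeightStructure D)
    (hglue_le : ∀ M : D, w.le0 M ↔ (wZ.le0 (iPull.obj M) ∧ wU.le0 (jPull.obj M)))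
    (hglue_ge : ∀ M : D, w.ge0 M ↔ (wZ.ge0 (iShk.obj M) ∧ wU.ge0 (jPull.obj M))) :
    ∀ M : D, w.le0 M ↔
      NegGen ({X : D | ∃ U : DU, wU.le0 U ∧ Nonempty (X ≅ jL.obj U)} ∪
        {X : D | ∃ Z : DZ, wZ.le0 Z ∧ Nonempty (X ≅ iSt.obj Z)}) M := by
  intro M
  constructor
  · intro hM
    obtain ⟨δ, hT⟩ := htri₁ M
    exact NegGen.ext _ _ _ hT
      (NegGen.of (Or.inl ⟨jPull.obj M, ((hglue_le M).1 hM).2, ⟨Iso.refl _⟩⟩))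
      (NegGen.of (Or.inr ⟨iPull.obj M, ((hglue_le M).1 hM).1, ⟨Iso.refl _⟩⟩))
  · intro hM
    induction hM with
    | @of X hX =>
      rcases hX with ⟨U, hU, ⟨e⟩⟩ | ⟨Z, hZ, ⟨e⟩⟩
      · refine w.le0_iso e.symm ?_
        rw [hglue_le]
        constructor
        · rw [wZ.le0_iff_orth]
          intro B hB φ
          have h0 : (adj₃.homEquiv U _) ((adj₁.homEquiv _ _) φ) =
              (adj₃.homEquiv U _) ((adj₁.homEquiv _ _) (0 : iPull.obj (jL.obj U) ⟶ B⟦(1 : ℤ)⟧)) :=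
            (hji (B⟦(1 : ℤ)⟧)).eq_of_tgt _ _
          exact (adj₁.homEquiv _ _).injective ((adj₃.homEquiv _ _).injective h0)
        · exact wU.le0_iso (asIso (adj₃.unit.app U)) hU
      · refine w.le0_iso e.symm ?_
        rw [hglue_le]
        exact ⟨wZ.le0_iso (asIso (adj₁.counit.app Z)).symm hZ,
          wU.le0_of_isZero (hji Z)⟩
    | iso e _ ih => exact w.le0_iso e ih
    | shiftNeg n hn _ ih => exact w.le0_shift_neg ih n hn
    | ext f g h hT _ _ ihX ihZ => exact w.le0_ext f g h hT ihX ihZ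
    | summand i r hir _ ih => exact w.le0_summand i r hir ih
end

section
/- Two weight structures on an idempotent-complete triangulated category C that have the same heart are equal, provided the heart generates C as a triangulated category (every object is obtained from heart objects by shifts and cones, up to direct summands). -/
open CategoryTheory Limits Pretriangulated

/-- The closure of a family of objects under isomorphisms, shifts, cones of
distinguished triangles, and direct summands: "generation as a triangulated
category, up to direct summands". -/
inductive TriaGenS {C : Type*} [Category C] [Preadditive C] [HasZeroObject C] [HasShift C ℤ]
    [∀ n : ℤ, (CategoryTheory.shiftFunctor C n).Additive] [Pretriangulated C]
    (S : Set C) : C → Prop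
  | of {X : C} : X ∈ S → TriaGenS S X
  | iso {X Y : C} : (X ≅ Y) → TriaGenS S X → TriaGenS S Y
  | shift {X : C} (n : ℤ) : TriaGenS S X → TriaGenS S (X⟦n⟧)
  | cone {X Y Z : C} (f : X ⟶ Y) (g : Y ⟶ Z) (h : Z ⟶ X⟦(1 : ℤ)⟧) :
      (Triangle.mk f g h ∈ distTriang C) → TriaGenS S X → TriaGenS S Y → TriaGenS S Z
  | summand {X Y : C} (i : X ⟶ Y) (r : Y ⟶ X) : i ≫ r = 𝟙 X → TriaGenS S Y → TriaGenS S X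

section Aux

variable {C : Type*} [Category C] [Preadditive C] [HasZeroObject C] [HasShift C ℤ]
  [∀ n : ℤ, (CategoryTheory.shiftFunctor C n).Additive] [Pretriangulated C]

namespace WeightStructure

variable (w : WeightStructure C)

lemma le0_iso_s16 {X Y : C} (e : X ≅ Y) (h : w.le0 X) : w.le0 Y :=
  w.le0_summand e.inv e.hom e.inv_hom_id h

lemma ge0_iso {X Y : C} (e : X ≅ Y) (h : w.ge0 X) : w.ge0 Y :=
  w.ge0_summand e.inv e.hom e.inv_hom_id h

lemma ge0_shift' {X : C} (h : w.ge0 X) (n : ℤ) (hn : 0 ≤ n) : w.ge0 (X⟦n⟧) := by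
  obtain ⟨m, rfl⟩ : ∃ m : ℕ, n = (m : ℤ) := ⟨n.toNat, by omega⟩
  induction m with
  | zero => exact w.ge0_iso ((shiftFunctorZero C ℤ).app X).symm h
  | succ m ih =>
      refine w.ge0_iso ((shiftFunctorAdd' C (m : ℤ) 1 ((m + 1 : ℕ) : ℤ)
        (by push_cast; ring)).app X).symm (w.ge0_shift (ih (by omega)))

/-- Generalized orthogonality: maps from `C_{w≤0}` to positive shifts of `C_{w≥0}` vanish. -/
lemma orth' {X Z : C} (hX : w.le0 X) (hZ : w.ge0 Z) (n : ℤ) (hn : 1 ≤ n)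
    (f : X ⟶ Z⟦n⟧) : f = 0 := by
  have e : Z⟦n⟧ ≅ (Z⟦n - 1⟧)⟦(1 : ℤ)⟧ := (shiftFunctorAdd' C (n - 1) 1 n (by ring)).app Z
  have h0 : f ≫ e.hom = 0 := w.orth hX (w.ge0_shift' hZ (n - 1) (by omega)) _
  rw [← Category.comp_id f, ← e.hom_inv_id, ← Category.assoc, h0, zero_comp]

/-- Characterization of `C_{w≤0}` by orthogonality. -/
lemma le0_of_orth {X : C} (h : ∀ Z : C, w.ge0 Z → ∀ f : X ⟶ Z⟦(1 : ℤ)⟧, f = 0) :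
    w.le0 X := by
  obtain ⟨A, B, hA, hB, f, g, hh, hT⟩ := w.decomp X
  obtain ⟨s, hs⟩ := Triangle.coyoneda_exact₂ _ hT (𝟙 X)
    (by exact (Category.id_comp g).trans (h B hB g))
  exact w.le0_summand s f hs.symm hA

/-- Characterization of `C_{w≥0}` by orthogonality. -/
lemma ge0_of_orth {X : C} (h : ∀ Z : C, w.le0 Z → ∀ f : Z ⟶ X⟦(1 : ℤ)⟧, f = 0) :
    w.ge0 X := by
  obtain ⟨A, B, hA, hB, f, g, hh, hT⟩ := w.decomp (X⟦(1 : ℤ)⟧)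
  have hT' := Triangle.shift_distinguished _ hT (-1)
  set T' := (CategoryTheory.shiftFunctor (Triangle C) (-1 : ℤ)).obj (Triangle.mk f g hh)
    with hT'def
  have hf0 : f = 0 := h A hA f
  have hmor : T'.mor₁ = 0 := by
    change ((-1 : ℤ).negOnePow • f⟦(-1 : ℤ)⟧') = 0
    rw [hf0, Functor.map_zero, smul_zero]
  obtain ⟨r, hr⟩ := Triangle.yoneda_exact₂ _ hT' (𝟙 T'.obj₂) (by rw [hmor, zero_comp])
  have h2 : w.ge0 T'.obj₃ := by
    exact w.ge0_iso ((shiftFunctorCompIsoId C (1 : ℤ) (-1) (by ring)).app B).symm hB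
  have h3 : w.ge0 T'.obj₂ := w.ge0_summand T'.mor₂ r hr.symm h2
  exact w.ge0_iso ((shiftFunctorCompIsoId C (1 : ℤ) (-1) (by ring)).app X) h3

/-- `C_{w≥0}` is closed under extensions. -/
lemma ge0_ext {T : Triangle C} (hT : T ∈ distTriang C)
    (h1 : w.ge0 T.obj₁) (h3 : w.ge0 T.obj₃) : w.ge0 T.obj₂ := by
  refine w.ge0_of_orth (fun Z hZ f => ?_)
  have hT' := Triangle.shift_distinguished _ hT 1
  set T' := (CategoryTheory.shiftFunctor (Triangle C) (1 : ℤ)).obj T with hT'def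
  have h0 : f ≫ T'.mor₂ = 0 := w.orth hZ h3 (f ≫ T'.mor₂)
  obtain ⟨b, hb⟩ := Triangle.coyoneda_exact₂ _ hT' f h0
  rw [hb, w.orth hZ h1 b]; exact zero_comp

/-- Uniform vanishing of maps into large shifts of `C_{w≥0}`. -/
def Van (w : WeightStructure C) (X : C) : Prop :=
  ∃ N : ℤ, ∀ n : ℤ, N ≤ n → ∀ Z : C, w.ge0 Z → ∀ f : X ⟶ Z⟦n⟧, f = 0

lemma van_shift {X : C} (hX : Van w X) (k : ℤ) : Van w (X⟦k⟧) := by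
  obtain ⟨N, hN⟩ := hX
  refine ⟨N + k, fun n hn Z hZ f => ?_⟩
  have e1 : (X⟦k⟧)⟦(-k)⟧ ≅ X := (shiftFunctorCompIsoId C k (-k) (by ring)).app X
  have e2 : Z⟦n + -k⟧ ≅ (Z⟦n⟧)⟦(-k)⟧ := (shiftFunctorAdd' C n (-k) (n + -k) rfl).app Z
  have hg : e1.inv ≫ f⟦(-k)⟧' ≫ e2.inv = 0 := hN (n + -k) (by omega) Z hZ _
  have hz : f⟦(-k)⟧' = 0 := by
    calc f⟦(-k)⟧' = e1.hom ≫ (e1.inv ≫ f⟦(-k)⟧' ≫ e2.inv) ≫ e2.hom := by simp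
    _ = 0 := by rw [hg, zero_comp, comp_zero]
  exact (CategoryTheory.shiftFunctor C (-k)).map_injective
    (by rw [hz, Functor.map_zero])

lemma van_of_triaGenS {S : Set C} (hS : ∀ Y ∈ S, w.le0 Y ∧ w.ge0 Y) {X : C}
    (hX : TriaGenS S X) : Van w X := by
  induction hX with
  | of h => exact ⟨1, fun n hn Z hZ f => w.orth' (hS _ h).1 hZ n hn f⟩
  | iso e _ ih =>
      obtain ⟨N, hN⟩ := ih
      exact ⟨N, fun n hn Z hZ f => by
        rw [← Category.id_comp f, ← e.inv_hom_id, Category.assoc, hN n hn Z hZ (e.hom ≫ f), comp_zero]⟩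
  | shift n _ ih => exact w.van_shift ih n
  | cone f g hh hT _ _ ihX ihY =>
      obtain ⟨N₂, hN₂⟩ := ihY
      obtain ⟨N₁', hN₁'⟩ := w.van_shift ihX 1
      refine ⟨max N₂ N₁', fun n hn Z hZ φ => ?_⟩
      obtain ⟨ψ, hψ⟩ := Triangle.yoneda_exact₂ _ (rot_of_distTriang _ hT) φ
        (hN₂ n (le_trans (le_max_left _ _) hn) Z hZ _)
      rw [hψ, hN₁' n (le_trans (le_max_right _ _) hn) Z hZ ψ]; exact comp_zero
  | summand i r hir _ ih =>
      obtain ⟨N, hN⟩ := ih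
      exact ⟨N, fun n hn Z hZ f => by
        rw [← Category.id_comp f, ← hir, Category.assoc, hN n hn Z hZ (r ≫ f), comp_zero]⟩

/-- The key vanishing: if `X ∈ C_{w₁≤0}`, the heart of `w₂` is contained in the
heart of `w₁`, and maps from `X` to large shifts of `C_{w₂≥0}` vanish, then maps
from `X` to all positive shifts of `C_{w₂≥0}` vanish. -/
lemma key_vanish (w₁ w₂ : WeightStructure C)
    (hh : ∀ A : C, w₂.le0 A ∧ w₂.ge0 A → w₁.le0 A ∧ w₁.ge0 A)
    {X : C} (hX : w₁.le0 X) (hV : Van w₂ X) :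
    ∀ n : ℤ, 1 ≤ n → ∀ Z : C, w₂.ge0 Z → ∀ f : X ⟶ Z⟦n⟧, f = 0 := by
  obtain ⟨N, hN⟩ := hV
  have main : ∀ k : ℕ, ∀ n : ℤ, 1 ≤ n → N ≤ n + k →
      ∀ Z : C, w₂.ge0 Z → ∀ f : X ⟶ Z⟦n⟧, f = 0 := by
    intro k
    induction k with
    | zero => intro n hn hb Z hZ f; exact hN n (by simpa using hb) Z hZ f
    | succ k ih =>
        intro n hn hb Z hZ f
        obtain ⟨A, B, hA, hB, a, b, c, hT⟩ := w₂.decomp Z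
        have hBB : w₂.ge0 ((B⟦(1 : ℤ)⟧)⟦(-1 : ℤ)⟧) :=
          w₂.ge0_iso ((shiftFunctorCompIsoId C (1 : ℤ) (-1) (by ring)).app B).symm hB
        have hA2 : w₂.ge0 A := w₂.ge0_ext (inv_rot_of_distTriang _ hT) hBB hZ
        have hAheart : w₁.le0 A ∧ w₁.ge0 A := hh A ⟨hA, hA2⟩
        have hTn := Triangle.shift_distinguished _ hT n
        set Tn := (CategoryTheory.shiftFunctor (Triangle C) n).obj (Triangle.mk a b c)
          with hTndef
        have e : B⟦(1 : ℤ) + n⟧ ≅ (B⟦(1 : ℤ)⟧)⟦n⟧ := (shiftFunctorAdd C 1 n).app B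
        have h2 : f ≫ Tn.mor₂ = 0 := by
          have h3 : (f ≫ Tn.mor₂) ≫ e.inv = 0 :=
            ih (1 + n) (by omega) (by omega) B hB _
          exact ((Iso.comp_inv_eq e).mp rfl).trans ((congrArg (· ≫ e.hom) h3).trans zero_comp)
        obtain ⟨χ, hχ⟩ := Triangle.coyoneda_exact₂ _ hTn f h2
        have hχ0 : χ = 0 := w₁.orth' hX hAheart.2 n hn χ
        rw [hχ, hχ0]; exact zero_comp
  intro n hn Z hZ f
  obtain ⟨k, hk⟩ : ∃ k : ℕ, N ≤ n + k := ⟨(N - n).toNat, by omega⟩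
  exact main k n hn hk Z hZ f

end WeightStructure

end Aux

/-- Bondarko's uniqueness: two weight structures on an idempotent-complete
triangulated category with the same heart coincide, provided this common heart
generates the category as a triangulated category up to direct summands. -/
theorem weightStructure_eq_of_heart_eq_of_heart_generates
    {C : Type*} [Category C] [Preadditive C] [HasZeroObject C] [HasShift C ℤ]
    [∀ n : ℤ, (CategoryTheory.shiftFunctor C n).Additive] [Pretriangulated C]
    [IsIdempotentComplete C]
    (w₁ w₂ : WeightStructure C)
    (hheart : ∀ X : C, (w₁.le0 X ∧ w₁.ge0 X) ↔ (w₂.le0 X ∧ w₂.ge0 X))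
    (hgen : ∀ X : C, TriaGenS {Y : C | w₁.le0 Y ∧ w₁.ge0 Y} X) :
    (∀ X : C, w₁.le0 X ↔ w₂.le0 X) ∧ (∀ X : C, w₁.ge0 X ↔ w₂.ge0 X) := by
  have hle : ∀ X : C, w₁.le0 X ↔ w₂.le0 X := by
    intro X
    constructor
    · intro h1
      refine w₂.le0_of_orth (fun Z hZ f => ?_)
      exact WeightStructure.key_vanish w₁ w₂ (fun A hA => (hheart A).mpr hA) h1
        (w₂.van_of_triaGenS (fun Y hY => (hheart Y).mp hY) (hgen X)) 1 le_rfl Z hZ f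
    · intro h2
      refine w₁.le0_of_orth (fun Z hZ f => ?_)
      exact WeightStructure.key_vanish w₂ w₁ (fun A hA => (hheart A).mp hA) h2
        (w₁.van_of_triaGenS (fun Y hY => hY) (hgen X)) 1 le_rfl Z hZ f
  refine ⟨hle, fun X => ?_⟩
  constructor
  · intro h1
    exact w₂.ge0_of_orth (fun Z hZ f => w₁.orth ((hle Z).mpr hZ) h1 f)
  · intro h2
    exact w₁.ge0_of_orth (fun Z hZ f => w₂.orth ((hle Z).mp hZ) h2 f)
end
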